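/- arXiv:2207.05830 — 3 statements merged into one kernel-verified Lean document; each statement's English description precedes it below -/
import Mathlib

section
/- Let I ⊆ ℝ be an open interval and (f_n) a sequence of C¹ real functions on I converging pointwise to a continuous function f on I. Assume the set of roots of f in I is finite and non-empty. Then sup{ d(r, roots(f_n · f_n')) : r ∈ roots(f) } → 0 as n → ∞, where d(r, ∅) := ∞ and d is the standard distance from a point to a set in ℝ. -/
open Filter Set

lemma aux_min (g : ℝ → ℝ) {x₁ x₂ r : ℝ}
    (hc : ContinuousOn g (Set.Icc x₁ x₂))
    (hr : r ∈ Set.Icc x₁ x₂) (h1 : g r < g x₁) (h2 : g r < g x₂) :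
    ∃ c ∈ Set.Ioo x₁ x₂, deriv g c = 0 := by
  have hle : x₁ ≤ x₂ := hr.1.trans hr.2
  obtain ⟨c, hcmem, hmin⟩ := isCompact_Icc.exists_isMinOn (Set.nonempty_Icc.mpr hle) hc
  have hgc : g c ≤ g r := hmin hr
  have hc1 : x₁ < c := lt_of_le_of_ne hcmem.1 (by rintro rfl; linarith)
  have hc2 : c < x₂ := lt_of_le_of_ne hcmem.2 (by rintro rfl; linarith)
  refine ⟨c, ⟨hc1, hc2⟩, ?_⟩
  exact (hmin.isLocalMin (Icc_mem_nhds hc1 hc2)).deriv_eq_zero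

lemma per_root (a b : ℝ) (f : ℕ → ℝ → ℝ) (F : ℝ → ℝ)
    (hf : ∀ n, ContDiffOn ℝ 1 (f n) (Set.Ioo a b))
    (hconv : ∀ x ∈ Set.Ioo a b, Tendsto (fun n => f n x) atTop (nhds (F x)))
    (hfin : {x ∈ Set.Ioo a b | F x = 0}.Finite)
    {ε : ℝ} (hε : 0 < ε) {r : ℝ} (hr : r ∈ Set.Ioo a b) (hFr : F r = 0) :
    ∀ᶠ n in atTop, ∃ x ∈ Set.Ioo a b, f n x * deriv (f n) x = 0 ∧ |r - x| < ε := by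
  -- choose x₁ < r with F x₁ ≠ 0
  have h1lt : max a (r - ε) < r := max_lt hr.1 (by linarith)
  have h2lt : r < min b (r + ε) := lt_min hr.2 (by linarith)
  obtain ⟨x₁, hx₁mem, hx₁S⟩ :=
    ((Set.Ioo_infinite h1lt).diff hfin).nonempty
  obtain ⟨x₂, hx₂mem, hx₂S⟩ :=
    ((Set.Ioo_infinite h2lt).diff hfin).nonempty
  have hx₁ab : x₁ ∈ Set.Ioo a b :=
    ⟨lt_of_le_of_lt (le_max_left _ _) hx₁mem.1, hx₁mem.2.trans hr.2⟩
  have hx₂ab : x₂ ∈ Set.Ioo a b :=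
    ⟨hr.1.trans hx₂mem.1, lt_of_lt_of_le hx₂mem.2 (min_le_left _ _)⟩
  have hFx₁ : F x₁ ≠ 0 := fun h => hx₁S ⟨hx₁ab, h⟩
  have hFx₂ : F x₂ ≠ 0 := fun h => hx₂S ⟨hx₂ab, h⟩
  have hx₁r : x₁ < r := hx₁mem.2
  have hrx₂ : r < x₂ := hx₂mem.1
  have hrx₁ε : r - x₁ < ε := by
    have := lt_of_le_of_lt (le_max_right a (r - ε)) hx₁mem.1; linarith
  have hx₂rε : x₂ - r < ε := by
    have := lt_of_lt_of_le hx₂mem.2 (min_le_right b (r + ε)); linarith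
  have hsub : Set.Icc x₁ x₂ ⊆ Set.Ioo a b := fun x hx =>
    ⟨lt_of_lt_of_le hx₁ab.1 hx.1, lt_of_le_of_lt hx.2 hx₂ab.2⟩
  set m := min |F x₁| |F x₂| with hm
  have hmpos : 0 < m := lt_min (abs_pos.mpr hFx₁) (abs_pos.mpr hFx₂)
  have E1 : ∀ᶠ n in atTop, dist (f n x₁) (F x₁) < |F x₁| / 2 := by
    obtain ⟨N, hN⟩ := Metric.tendsto_atTop.mp (hconv x₁ hx₁ab) (|F x₁| / 2)
      (half_pos (abs_pos.mpr hFx₁))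
    exact eventually_atTop.mpr ⟨N, hN⟩
  have E2 : ∀ᶠ n in atTop, dist (f n x₂) (F x₂) < |F x₂| / 2 := by
    obtain ⟨N, hN⟩ := Metric.tendsto_atTop.mp (hconv x₂ hx₂ab) (|F x₂| / 2)
      (half_pos (abs_pos.mpr hFx₂))
    exact eventually_atTop.mpr ⟨N, hN⟩
  have E0 : ∀ᶠ n in atTop, dist (f n r) (F r) < m / 2 := by
    obtain ⟨N, hN⟩ := Metric.tendsto_atTop.mp (hconv r hr) (m / 2) (half_pos hmpos)
    exact eventually_atTop.mpr ⟨N, hN⟩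
  filter_upwards [E1, E2, E0] with n h1 h2 h0
  rw [Real.dist_eq, abs_sub_lt_iff] at h1 h2
  rw [hFr, Real.dist_eq, sub_zero, abs_lt] at h0
  have hm1 : m ≤ |F x₁| := min_le_left _ _
  have hm2 : m ≤ |F x₂| := min_le_right _ _
  have hcont : ContinuousOn (f n) (Set.Icc x₁ x₂) := ((hf n).continuousOn).mono hsub
  have hrIcc : r ∈ Set.Icc x₁ x₂ := ⟨hx₁r.le, hrx₂.le⟩
  have hdistc : ∀ c ∈ Set.Ioo x₁ x₂, |r - c| < ε := by
    intro c hc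
    rw [abs_sub_lt_iff]
    constructor <;> [linarith [hc.1]; linarith [hc.2]]
  rcases lt_or_gt_of_ne hFx₁ with hs1 | hs1 <;> rcases lt_or_gt_of_ne hFx₂ with hs2 | hs2
  · -- F x₁ < 0, F x₂ < 0 : interior min of -f n
    rw [abs_of_neg hs1] at h1 hm1
    rw [abs_of_neg hs2] at h2 hm2
    obtain ⟨c, hc, hdc⟩ := aux_min (fun x => -(f n x)) (hcont.neg) hrIcc
      (by simp only [neg_lt_neg_iff]; linarith) (by simp only [neg_lt_neg_iff]; linarith)
    refine ⟨c, hsub ⟨hc.1.le, hc.2.le⟩, ?_, hdistc c hc⟩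
    have : deriv (f n) c = 0 := by
      have h := deriv.fun_neg (f := f n) (x := c)
      rw [hdc] at h; linarith [h]
    rw [this, mul_zero]
  · -- F x₁ < 0 < F x₂ : IVT
    rw [abs_of_neg hs1] at h1 hm1
    rw [abs_of_pos hs2] at h2 hm2
    have h0mem : (0 : ℝ) ∈ Set.Ioo (f n x₁) (f n x₂) := ⟨by linarith, by linarith⟩
    obtain ⟨c, hc, hfc⟩ := intermediate_value_Ioo (hx₁r.trans hrx₂).le hcont h0mem
    exact ⟨c, hsub ⟨hc.1.le, hc.2.le⟩, by rw [hfc, zero_mul], hdistc c hc⟩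
  · -- F x₁ > 0 > F x₂ : IVT
    rw [abs_of_pos hs1] at h1 hm1
    rw [abs_of_neg hs2] at h2 hm2
    have h0mem : (0 : ℝ) ∈ Set.Ioo (f n x₂) (f n x₁) := ⟨by linarith, by linarith⟩
    obtain ⟨c, hc, hfc⟩ := intermediate_value_Ioo' (hx₁r.trans hrx₂).le hcont h0mem
    exact ⟨c, hsub ⟨hc.1.le, hc.2.le⟩, by rw [hfc, zero_mul], hdistc c hc⟩
  · -- F x₁ > 0, F x₂ > 0 : interior min of f n
    rw [abs_of_pos hs1] at h1 hm1
    rw [abs_of_pos hs2] at h2 hm2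
    obtain ⟨c, hc, hdc⟩ := aux_min (f n) hcont hrIcc (by linarith) (by linarith)
    exact ⟨c, hsub ⟨hc.1.le, hc.2.le⟩, by rw [hdc, mul_zero], hdistc c hc⟩

/-- Let `I = (a,b)` be an open interval and `(f_n)` a sequence of `C¹` real
functions on `I` converging pointwise on `I` to a continuous function `F` with finitely many and
at least one root in `I`. Then the distance from each root of `F` to the root set of
`f_n ⬝ f_n'` tends to `0` uniformly over the roots of `F`: for every `ε > 0`, eventually every
root `r` of `F` admits a point `x ∈ I` with `f_n x * f_n' x = 0` and `|r - x| < ε`. -/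
theorem stmt5 (a b : ℝ) (f : ℕ → ℝ → ℝ) (F : ℝ → ℝ)
    (hf : ∀ n, ContDiffOn ℝ 1 (f n) (Set.Ioo a b))
    (hconv : ∀ x ∈ Set.Ioo a b, Tendsto (fun n => f n x) atTop (nhds (F x)))
    (hF : ContinuousOn F (Set.Ioo a b))
    (hfin : {x ∈ Set.Ioo a b | F x = 0}.Finite)
    (hne : {x ∈ Set.Ioo a b | F x = 0}.Nonempty) :
    ∀ ε > 0, ∃ N : ℕ, ∀ n ≥ N, ∀ r ∈ Set.Ioo a b, F r = 0 →
      ∃ x ∈ Set.Ioo a b, f n x * deriv (f n) x = 0 ∧ |r - x| < ε := by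
  intro ε hε
  have H : ∀ᶠ n in atTop, ∀ r ∈ {x ∈ Set.Ioo a b | F x = 0},
      ∃ x ∈ Set.Ioo a b, f n x * deriv (f n) x = 0 ∧ |r - x| < ε :=
    (Filter.eventually_all_finite hfin).mpr
      (fun r hr => per_root a b f F hf hconv hfin hε hr.1 hr.2)
  obtain ⟨N, hN⟩ := eventually_atTop.mp H
  exact ⟨N, fun n hn r hrmem hFr => hN n hn r ⟨hrmem, hFr⟩⟩
end

section
/- Define a semi-polynomial to be a real function on (0, ∞) of the form f(x) = Σ_{k=1}^n a_k x^{α_k}, where a_k, α_k are real numbers, all a_k ≠ 0, the α_k are pairwise distinct. Such a function f (with n ≥ 1) has only finitely many positive roots; moreover, the number of distinct positive roots of f is at most twice the number of sign changes in the sequence of coefficients a_k sorted by increasing exponent α_k. -/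
open Set


/-- If all positive critical points of `g` lie in a finite set `T` of cardinality `≤ m`,
and `g` is differentiable on `(0,∞)`, then `g` has at most `m+1` positive roots. -/
lemma rolle_count (g G : ℝ → ℝ) (hd : ∀ x : ℝ, 0 < x → HasDerivAt g (G x) x)
    (T : Set ℝ) (hT : T.Finite) (m : ℕ) (hTm : T.ncard ≤ m)
    (hcrit : ∀ x : ℝ, 0 < x → G x = 0 → x ∈ T) :
    {x : ℝ | 0 < x ∧ g x = 0}.Finite ∧ {x : ℝ | 0 < x ∧ g x = 0}.ncard ≤ m + 1 := by
  set S := {x : ℝ | 0 < x ∧ g x = 0} with hS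
  by_contra hcon
  -- extract a Finset of size m+2 inside S
  obtain ⟨t, hts, htc⟩ : ∃ t : Finset ℝ, ↑t ⊆ S ∧ t.card = m + 2 := by
    rcases S.finite_or_infinite with hfin | hinf
    · have h2 : m + 2 ≤ S.ncard := by
        by_contra hle
        exact hcon ⟨hfin, by omega⟩
      obtain ⟨u, hu, huc⟩ := Finset.exists_subset_card_eq
        (s := hfin.toFinset) (n := m + 2) (by rwa [Set.ncard_eq_toFinset_card S hfin] at h2)
      exact ⟨u, fun x hx => hfin.mem_toFinset.mp (hu hx), huc⟩
    · exact hinf.exists_subset_card_eq (m + 2)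
  -- order-isomorphic enumeration
  have e := t.orderIsoOfFin htc
  set x : Fin (m + 2) → ℝ := fun i => (e i : ℝ) with hx
  have hxmono : StrictMono x := fun i j hij => by
    exact_mod_cast e.strictMono hij
  have hxS : ∀ i, x i ∈ S := fun i => hts (e i).2
  -- Rolle between consecutive roots
  have key : ∀ i : Fin (m + 1), ∃ c ∈ Ioo (x i.castSucc) (x i.succ), c ∈ T := by
    intro i
    have hlt : x i.castSucc < x i.succ := hxmono Fin.castSucc_lt_succ
    have hpos : (0 : ℝ) < x i.castSucc := (hxS i.castSucc).1
    have hc : ContinuousOn g (Icc (x i.castSucc) (x i.succ)) := by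
      intro y hy
      have hy0 : 0 < y := lt_of_lt_of_le hpos hy.1
      exact ((hd y hy0).continuousAt).continuousWithinAt
    obtain ⟨c, hc1, hc2⟩ := exists_deriv_eq_zero hlt hc
      (by rw [(hxS i.castSucc).2, (hxS i.succ).2])
    have hc0 : 0 < c := lt_trans hpos hc1.1
    have : deriv g c = G c := (hd c hc0).deriv
    exact ⟨c, hc1, hcrit c hc0 (by rw [← this, hc2])⟩
  choose c hc hcT using key
  have hcmono : StrictMono c := by
    intro i j hij
    calc c i < x i.succ := (hc i).2
      _ ≤ x j.castSucc := hxmono.monotone (by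
          rw [Fin.le_def]; rw [Fin.lt_def] at hij
          simp only [Fin.val_succ, Fin.coe_castSucc] at *; omega)
      _ < c j := (hc j).1
  have hrange : Set.range c ⊆ T := range_subset_iff.mpr hcT
  have : (m + 1 : ℕ) ≤ T.ncard := by
    have h1 : (Set.range c).ncard = m + 1 := by
      rw [← Set.image_univ, Set.ncard_image_of_injective _ hcmono.injective]
      simp [Set.ncard_univ]
    rw [← h1]
    exact Set.ncard_le_ncard hrange hT
  omega


lemma no_sign_change_no_root (n : ℕ) (hn : 1 ≤ n) (a α : Fin n → ℝ)
    (ha : ∀ k, a k ≠ 0)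
    (hsc : ∀ i : Fin n, ∀ h : (i : ℕ) + 1 < n, 0 < a i * a ⟨(i : ℕ) + 1, h⟩) :
    ∀ x : ℝ, 0 < x → ∑ k, a k * x ^ (α k) ≠ 0 := by
  intro x hx hsum
  have h0 : (0 : ℕ) < n := hn
  have key : ∀ m : ℕ, ∀ hm : m < n, 0 < a ⟨0, h0⟩ * a ⟨m, hm⟩ := by
    intro m
    induction m with
    | zero => intro hm; exact mul_self_pos.mpr (ha _)
    | succ p ih =>
      intro hm
      have hp : p < n := by omega
      have h1 := ih hp
      have h2 := hsc ⟨p, hp⟩ hm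
      have h3 : 0 < a ⟨p, hp⟩ * a ⟨p, hp⟩ := mul_self_pos.mpr (ha _)
      nlinarith [mul_pos h1 h2]
  have hpos : 0 < ∑ k, (a ⟨0, h0⟩ * a k) * x ^ (α k) := by
    apply Finset.sum_pos
    · intro k _
      exact mul_pos (key k.1 k.2) (Real.rpow_pos_of_pos hx _)
    · exact @Finset.univ_nonempty (Fin n) _ ⟨⟨0, h0⟩⟩
  have : ∑ k, (a ⟨0, h0⟩ * a k) * x ^ (α k) = a ⟨0, h0⟩ * ∑ k, a k * x ^ (α k) := by
    rw [Finset.mul_sum]; congr 1; ext k; ring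
  rw [this, hsum, mul_zero] at hpos
  exact lt_irrefl _ hpos

lemma roots_empty_of_no_sign_change (n : ℕ) (hn : 1 ≤ n) (a α : Fin n → ℝ)
    (ha : ∀ k, a k ≠ 0)
    (hA : {i : Fin n | ∃ h : (i : ℕ) + 1 < n, a i * a ⟨(i : ℕ) + 1, h⟩ < 0} = ∅) :
    {x : ℝ | 0 < x ∧ ∑ k, a k * x ^ (α k) = 0} = ∅ := by
  have hsc : ∀ i : Fin n, ∀ h : (i : ℕ) + 1 < n, 0 < a i * a ⟨(i : ℕ) + 1, h⟩ := by
    intro i h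
    rcases (mul_ne_zero (ha i) (ha ⟨(i : ℕ) + 1, h⟩)).lt_or_gt with hlt | hlt
    · exfalso
      have hmem : i ∈ {i : Fin n | ∃ h : (i : ℕ) + 1 < n, a i * a ⟨(i : ℕ) + 1, h⟩ < 0} :=
        ⟨h, hlt⟩
      rw [hA] at hmem
      exact notMem_empty i hmem
    · exact hlt
  ext x
  simp only [mem_setOf_eq, mem_empty_iff_false, iff_false, not_and]
  exact fun hx => no_sign_change_no_root n hn a α ha hsc x hx

lemma main_bound : ∀ m n : ℕ, 1 ≤ n → ∀ a α : Fin n → ℝ, (∀ k, a k ≠ 0) → StrictMono α →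
    {i : Fin n | ∃ h : (i : ℕ) + 1 < n, a i * a ⟨(i : ℕ) + 1, h⟩ < 0}.ncard ≤ m →
    {x : ℝ | 0 < x ∧ ∑ k, a k * x ^ (α k) = 0}.Finite ∧
    {x : ℝ | 0 < x ∧ ∑ k, a k * x ^ (α k) = 0}.ncard ≤ m := by
  intro m
  induction m with
  | zero =>
    intro n hn a α ha hα hA
    have hAe : {i : Fin n | ∃ h : (i : ℕ) + 1 < n, a i * a ⟨(i : ℕ) + 1, h⟩ < 0} = ∅ :=
      (Set.ncard_eq_zero (Set.toFinite _)).mp (Nat.le_zero.mp hA)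
    rw [roots_empty_of_no_sign_change n hn a α ha hAe]
    exact ⟨finite_empty, by simp⟩
  | succ m ih =>
    intro n hn a α ha hα hA
    set A := {i : Fin n | ∃ h : (i : ℕ) + 1 < n, a i * a ⟨(i : ℕ) + 1, h⟩ < 0} with hAdef
    rcases A.eq_empty_or_nonempty with hAe | ⟨j, hj⟩
    · rw [roots_empty_of_no_sign_change n hn a α ha hAe]
      exact ⟨finite_empty, by simp⟩
    obtain ⟨hj1, hjsign⟩ := hj
    set j1 : Fin n := ⟨(j : ℕ) + 1, hj1⟩ with hj1def
    have hjlt : j < j1 := by simp [Fin.lt_def, hj1def]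
    set β : ℝ := (α j + α j1) / 2 with hβdef
    have hαjlt : α j < α j1 := hα hjlt
    have hβ1 : α j < β := by rw [hβdef]; linarith
    have hβ2 : β < α j1 := by rw [hβdef]; linarith
    have hneg : ∀ k : Fin n, k ≤ j → α k - β < 0 := by
      intro k hk
      have := hα.monotone hk; linarith
    have hposk : ∀ k : Fin n, j < k → 0 < α k - β := by
      intro k hk
      have hk1 : j1 ≤ k := by
        rw [Fin.le_def]; rw [Fin.lt_def] at hk; simp [hj1def]; omega
      have := hα.monotone hk1; linarith
    set b : Fin n → ℝ := fun k => a k * (α k - β) with hbdef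
    set α' : Fin n → ℝ := fun k => α k - β - 1 with hα'def
    have hbne : ∀ k, b k ≠ 0 := by
      intro k
      apply mul_ne_zero (ha k)
      rcases le_or_gt k j with h | h
      · exact (hneg k h).ne
      · exact (hposk k h).ne'
    have hα'mono : StrictMono α' := by
      intro i k hik
      simp only [hα'def]
      have := hα hik; linarith
    -- the factor (α i - β)(α (i+1) - β) is positive when i ≠ j
    have hfacpos : ∀ i : Fin n, ∀ h : (i : ℕ) + 1 < n, i ≠ j →
        0 < (α i - β) * (α ⟨(i : ℕ) + 1, h⟩ - β) := by
      intro i h hij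
      rcases lt_or_gt_of_ne (fun hv => hij (Fin.ext hv) : (i : ℕ) ≠ (j : ℕ)) with hlt | hgt
      · apply mul_pos_of_neg_of_neg
        · exact hneg i (by rw [Fin.le_def]; omega)
        · exact hneg ⟨(i : ℕ) + 1, h⟩ (by rw [Fin.le_def]; simpa using hlt)
      · apply mul_pos
        · exact hposk i (by rw [Fin.lt_def]; omega)
        · exact hposk ⟨(i : ℕ) + 1, h⟩ (by rw [Fin.lt_def]; simp; omega)
    have hA' : {i : Fin n | ∃ h : (i : ℕ) + 1 < n, b i * b ⟨(i : ℕ) + 1, h⟩ < 0} = A \ {j} := by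
      ext i
      simp only [hAdef, mem_setOf_eq, mem_diff, mem_singleton_iff]
      have hfactor : ∀ h : (i : ℕ) + 1 < n, b i * b ⟨(i : ℕ) + 1, h⟩ =
          (a i * a ⟨(i : ℕ) + 1, h⟩) * ((α i - β) * (α ⟨(i : ℕ) + 1, h⟩ - β)) := by
        intro h; simp only [hbdef]; ring
      constructor
      · rintro ⟨h, hbi⟩
        rw [hfactor h] at hbi
        by_cases hij : i = j
        · exfalso
          have hv : (i : ℕ) = (j : ℕ) := congrArg Fin.val hij
          have hieq : (⟨(i : ℕ) + 1, h⟩ : Fin n) = j1 := Fin.ext (by simp [hj1def, hv])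
          rw [hieq, hij] at hbi
          have hf1 : α j - β < 0 := hneg j le_rfl
          have hf2 : 0 < α j1 - β := hposk j1 hjlt
          exact absurd (mul_pos_of_neg_of_neg hjsign (mul_neg_of_neg_of_pos hf1 hf2))
            (by linarith)
        · have hpos := hfacpos i h hij
          refine ⟨⟨h, ?_⟩, hij⟩
          nlinarith
      · rintro ⟨⟨h, hai⟩, hij⟩
        have hpos := hfacpos i h hij
        exact ⟨h, by rw [hfactor h]; exact mul_neg_of_neg_of_pos hai hpos⟩
    have hA'card : {i : Fin n | ∃ h : (i : ℕ) + 1 < n, b i * b ⟨(i : ℕ) + 1, h⟩ < 0}.ncard ≤ m := by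
      rw [hA']
      have hssub : A \ {j} ⊂ A := Set.sdiff_singleton_ssubset.mpr ⟨hj1, hjsign⟩
      have := Set.ncard_lt_ncard hssub (Set.toFinite _)
      omega
    obtain ⟨hTfin, hTcard⟩ := ih n hn b α' hbne hα'mono hA'card
    -- derivative
    have hg : ∀ x : ℝ, 0 < x → HasDerivAt (fun x => ∑ k, a k * x ^ (α k - β))
        (∑ k, b k * x ^ (α' k)) x := by
      intro x hx
      apply HasDerivAt.fun_sum
      intro k _
      have h1 : HasDerivAt (fun x : ℝ => x ^ (α k - β)) ((α k - β) * x ^ (α k - β - 1)) x :=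
        Real.hasDerivAt_rpow_const (Or.inl hx.ne')
      have h2 := h1.const_mul (a k)
      convert h2 using 1
      · rfl
      simp only [hbdef, hα'def]; ring
    obtain ⟨hSfin, hScard⟩ := rolle_count _ _ hg
      {x : ℝ | 0 < x ∧ ∑ k, b k * x ^ (α' k) = 0} hTfin m hTcard
      (fun x hx hGx => ⟨hx, hGx⟩)
    have hSeq : {x : ℝ | 0 < x ∧ ∑ k, a k * x ^ (α k - β) = 0} =
        {x : ℝ | 0 < x ∧ ∑ k, a k * x ^ (α k) = 0} := by
      ext x
      simp only [mem_setOf_eq, and_congr_right_iff]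
      intro hx
      have hsum : ∑ k, a k * x ^ (α k) = x ^ β * ∑ k, a k * x ^ (α k - β) := by
        rw [Finset.mul_sum]
        refine Finset.sum_congr rfl fun k _ => ?_
        rw [← mul_assoc, mul_comm (x ^ β) (a k), mul_assoc, ← Real.rpow_add hx]
        congr 2
        ring
      constructor
      · intro h; rw [hsum, h, mul_zero]
      · intro h
        rw [hsum] at h
        rcases mul_eq_zero.mp h with h' | h'
        · exact absurd h' (Real.rpow_pos_of_pos hx β).ne'
        · exact h'
    rw [← hSeq]
    exact ⟨hSfin, by omega⟩


/-- A semi-polynomial `f(x) = Σ_{k} a_k x^{α_k}` on `(0, ∞)` (with all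
`a_k ≠ 0` and the exponents `α_k` distinct and listed in increasing order) has finitely many
positive roots, and the number of distinct positive roots is at most twice the number of sign
changes in the coefficient sequence `a`. -/
theorem stmt6 (n : ℕ) (hn : 1 ≤ n) (a α : Fin n → ℝ)
    (ha : ∀ k, a k ≠ 0) (hα : StrictMono α) :
    {x : ℝ | 0 < x ∧ ∑ k, a k * x ^ (α k) = 0}.Finite ∧
    {x : ℝ | 0 < x ∧ ∑ k, a k * x ^ (α k) = 0}.ncard ≤
      2 * {i : Fin n | ∃ h : (i : ℕ) + 1 < n, a i * a ⟨(i : ℕ) + 1, h⟩ < 0}.ncard := by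
  obtain ⟨hfin, hcard⟩ := main_bound
    {i : Fin n | ∃ h : (i : ℕ) + 1 < n, a i * a ⟨(i : ℕ) + 1, h⟩ < 0}.ncard
    n hn a α ha hα le_rfl
  exact ⟨hfin, by omega⟩
end

section
/- Let G₁, G₂ be finite groups. Suppose the set of distinct dimensions of irreducible complex representations of G₁ has cardinality at most k, and that ζ_{G₁}(s) = ζ_{G₂}(s) for 4k + 1 distinct real values of s. Then ζ_{G₁} = ζ_{G₂} identically; equivalently, the multisets of irreducible representation dimensions of G₁ and G₂ coincide. -/
open CategoryTheory Module

/-- Isomorphism of irreducible representations of dimension `d`, as a setoid. -/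
def irrSetoid (k G : Type) [Field k] [Group G] (d : ℕ) :
    Setoid {V : FDRep k G // Simple V ∧ finrank k V = d} where
  r V W := Nonempty (V.1 ≅ W.1)
  iseqv := ⟨fun _ => ⟨Iso.refl _⟩, fun ⟨e⟩ => ⟨e.symm⟩, fun ⟨e⟩ ⟨f⟩ => ⟨e.trans f⟩⟩

/-- Isomorphism classes of irreducible representations of dimension `d`. -/
def IrrOfDim (k G : Type) [Field k] [Group G] (d : ℕ) := Quotient (irrSetoid k G d)

/-- The representation zeta function `ζ_G(s) = Σ_{ρ ∈ irr(G)} (dim ρ)^{-s}`. -/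
noncomputable def repZeta (G : Type) [Group G] [Fintype G] (s : ℝ) : ℝ :=
  ∑ᶠ d : ℕ, (Nat.card (IrrOfDim ℂ G d) : ℝ) * (d : ℝ) ^ (-s)

section RepTheory

open scoped Classical

variable (G : Type) [Group G] [Fintype G]

noncomputable def pairB (f h : G → ℂ) : ℂ := ∑ x : G, f x * h x⁻¹

lemma pair_orth (V W : FDRep ℂ G) [Simple V] [Simple W] :
    pairB G V.character W.character =
      if Nonempty (V ≅ W) then (Fintype.card G : ℂ) else 0 := by
  have h := FDRep.char_orthonormal (k := ℂ) (G := G) V W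
  have hc : (Nat.card G : ℂ) ≠ 0 := by exact_mod_cast Nat.card_pos.ne'
  rw [inv_mul_eq_iff_eq_mul₀ hc] at h
  rw [pairB, h]
  split_ifs <;> simp [Nat.card_eq_fintype_card]

/-- The set of characters of simple representations. -/
def charSet : Set (G → ℂ) := {f | ∃ V : FDRep ℂ G, Simple V ∧ V.character = f}

lemma pairB_sum {ι : Type*} (s : Finset ι) (g : ι → ℂ) (v : ι → G → ℂ) (h : G → ℂ) :
    pairB G (∑ i ∈ s, g i • v i) h = ∑ i ∈ s, g i * pairB G (v i) h := by
  simp only [pairB, Finset.mul_sum]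
  rw [Finset.sum_comm]
  congr 1; ext x
  simp [Finset.sum_apply, Finset.sum_mul, mul_assoc]

lemma charSet_finite : (charSet G).Finite := by
  apply LinearIndependent.setFinite (R := ℂ)
  rw [linearIndependent_iff']
  intro s g hsum j hj
  have h2 : pairB G (∑ i ∈ s, g i • (i : G → ℂ)) (j : G → ℂ) = 0 := by
    rw [hsum]; simp [pairB]
  rw [pairB_sum] at h2
  have horth : ∀ i ∈ s, g i * pairB G (i : G → ℂ) (j : G → ℂ)
      = if i = j then g i * (Fintype.card G : ℂ) else 0 := by
    intro i _
    obtain ⟨Vi, hVi, hchi⟩ := i.2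
    obtain ⟨Vj, hVj, hchj⟩ := j.2
    haveI := hVi; haveI := hVj
    have := pair_orth G Vi Vj
    rw [hchi, hchj] at this
    by_cases hij : i = j
    · subst hij
      have hself := pair_orth G Vi Vi
      rw [hchi] at hself
      rw [hself, if_pos ⟨Iso.refl _⟩, if_pos rfl]
    · rw [this, if_neg hij, if_neg, mul_zero]
      rintro ⟨e⟩
      exact hij (Subtype.ext (by rw [← hchi, ← hchj, FDRep.char_iso e]))
  rw [Finset.sum_congr rfl horth,
    Finset.sum_ite_eq' s j (fun i => g i * (Fintype.card G : ℂ))] at h2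
  rw [if_pos hj] at h2
  have hcard : (Fintype.card G : ℂ) ≠ 0 := by exact_mod_cast Fintype.card_ne_zero
  exact (mul_eq_zero.mp h2).resolve_right hcard

def dimSet : Set ℕ := {d | ∃ V : FDRep ℂ G, Simple V ∧ finrank ℂ V = d}

lemma dimSet_finite : (dimSet G).Finite := by
  have key : ∀ d ∈ dimSet G, ∃ f ∈ charSet G, f 1 = (d : ℂ) := by
    rintro d ⟨V, hV, hd⟩
    exact ⟨V.character, ⟨V, hV, rfl⟩, by rw [FDRep.char_one, hd]⟩
  choose φ hφ hφ1 using key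
  have : Set.InjOn (fun x : dimSet G => φ x x.2) Set.univ := by
    intro a _ b _ hab
    have : (a : ℂ) = (b : ℂ) := by
      rw [← hφ1 a a.2, ← hφ1 b b.2]; exact congrFun hab 1
    exact Subtype.ext (by exact_mod_cast this)
  have hfin : Set.Finite (Set.univ : Set (dimSet G)) := by
    apply Set.Finite.of_finite_image _ this
    exact (charSet_finite G).subset (by rintro f ⟨a, -, rfl⟩; exact hφ a a.2)
  haveI := Set.finite_univ_iff.mp hfin
  exact Set.toFinite _

lemma zero_not_mem_dimSet : 0 ∉ dimSet G := by
  rintro ⟨V, hV, hd⟩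
  haveI := hV
  haveI : Subsingleton V := finrank_zero_iff.mp hd
  have hchar : V.character = 0 := by
    ext g
    rw [FDRep.character, Subsingleton.elim (V.ρ g) 0, map_zero]; rfl
  have := pair_orth G V V
  rw [if_pos ⟨Iso.refl _⟩, hchar] at this
  simp only [pairB, Pi.zero_apply, zero_mul, Finset.sum_const_zero] at this
  exact Fintype.card_ne_zero (by exact_mod_cast this.symm)

lemma mem_dimSet_of_card_ne_zero (d : ℕ) (h : Nat.card (IrrOfDim ℂ G d) ≠ 0) :
    d ∈ dimSet G := by
  have hne : Nonempty (IrrOfDim ℂ G d) := by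
    by_contra hno
    rw [not_nonempty_iff] at hno
    exact h Nat.card_of_isEmpty
  obtain ⟨q⟩ := hne
  obtain ⟨a, -⟩ := Quotient.exists_rep q
  exact ⟨a.1, a.2.1, a.2.2⟩

end RepTheory

/-- Between any `n` zeros of `h` there are `n-1` zeros of its derivative `g`. -/
lemma rolle_finset (h g : ℝ → ℝ) (hd : ∀ x, HasDerivAt h (g x) x) :
    ∀ (N : ℕ) (T : Finset ℝ), T.card ≤ N → (∀ t ∈ T, h t = 0) →
      ∃ T' : Finset ℝ, T.card ≤ T'.card + 1 ∧ (∀ t ∈ T', g t = 0) ∧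
        ∀ t ∈ T', ∃ a ∈ T, a < t := by
  have hcont : Continuous h := by
    rw [continuous_iff_continuousAt]; exact fun x => (hd x).continuousAt
  intro N
  induction N with
  | zero => intro T hT _; exact ⟨∅, by omega, by simp, by simp⟩
  | succ N ih =>
    intro T hT hzero
    by_cases h1 : T.card ≤ 1
    · exact ⟨∅, by simpa using h1, by simp, by simp⟩
    push_neg at h1
    have hTne : T.Nonempty := Finset.card_pos.mp (by omega)
    set a := T.min' hTne with ha
    have haT : a ∈ T := T.min'_mem hTne
    set T₁ := T.erase a with hT₁
    have hT₁card : T₁.card = T.card - 1 := Finset.card_erase_of_mem haT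
    have hT₁ne : T₁.Nonempty := Finset.card_pos.mp (by omega)
    set b := T₁.min' hT₁ne with hb
    have hbT₁ : b ∈ T₁ := T₁.min'_mem hT₁ne
    have hab : a < b := by
      rcases Finset.mem_erase.mp hbT₁ with ⟨hne, hbT⟩
      exact lt_of_le_of_ne (T.min'_le b hbT) (Ne.symm hne)
    obtain ⟨z, hz, hgz⟩ := exists_hasDerivAt_eq_zero hab hcont.continuousOn
      (by rw [hzero a haT, hzero b (Finset.mem_of_mem_erase hbT₁)])
      (fun x _ => hd x)
    obtain ⟨T'', hc'', hz'', hgt''⟩ := ih T₁ (by omega)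
      (fun t ht => hzero t (Finset.mem_of_mem_erase ht))
    have hzT'' : z ∉ T'' := by
      intro hmem
      obtain ⟨a', ha'T₁, ha'z⟩ := hgt'' z hmem
      exact absurd (lt_of_lt_of_le hz.2 (T₁.min'_le a' ha'T₁)) (not_lt.mpr ha'z.le)
    refine ⟨insert z T'', ?_, ?_, ?_⟩
    · rw [Finset.card_insert_of_notMem hzT'']; omega
    · intro t ht
      rcases Finset.mem_insert.mp ht with rfl | ht
      · exact hgz
      · exact hz'' t ht
    · intro t ht
      rcases Finset.mem_insert.mp ht with rfl | ht
      · exact ⟨a, haT, hz.1⟩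
      · obtain ⟨a', ha', hlt⟩ := hgt'' t ht
        exact ⟨a', Finset.mem_of_mem_erase ha', hlt⟩

/-- number of sign changes in `c 0, ..., c (n-1)`. -/
noncomputable def schanges (c : ℕ → ℝ) (n : ℕ) : ℕ :=
  ((Finset.range (n-1)).filter fun i => c i * c (i+1) < 0).card

lemma descartes : ∀ (m n : ℕ), 0 < n → ∀ (L c : ℕ → ℝ),
    (∀ i j, i < j → j < n → L i < L j) → (∀ i, i < n → c i ≠ 0) →
    schanges c n ≤ m → ∀ T : Finset ℝ,
    (∀ t ∈ T, ∑ i ∈ Finset.range n, c i * Real.exp (L i * t) = 0) → T.card ≤ m := by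
  intro m
  induction m with
  | zero =>
    intro n hn L c hL hc hch T hT
    -- all signs equal; sum cannot vanish
    have hfilter : ((Finset.range (n-1)).filter fun i => c i * c (i+1) < 0) = ∅ :=
      Finset.card_eq_zero.mp (Nat.le_zero.mp hch)
    have hsign : ∀ i, i < n → 0 < c 0 * c i := by
      intro i
      induction i with
      | zero => intro _; exact mul_self_pos.mpr (hc 0 hn)
      | succ i ih =>
        intro hi1
        have hi : i < n := by omega
        have h1 : 0 < c 0 * c i := ih hi
        have h2 : ¬ (c i * c (i+1) < 0) := by
          have : i ∈ Finset.range (n-1) := Finset.mem_range.mpr (by omega)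
          intro hlt
          have : i ∈ ((Finset.range (n-1)).filter fun i => c i * c (i+1) < 0) :=
            Finset.mem_filter.mpr ⟨this, hlt⟩
          simp [hfilter] at this
        have h3 : 0 < c i * c (i+1) :=
          lt_of_le_of_ne (not_lt.mp h2) (Ne.symm (mul_ne_zero (hc i hi) (hc (i+1) hi1)))
        nlinarith [mul_self_pos.mpr (hc i hi)]
    rw [Nat.le_zero, Finset.card_eq_zero]
    by_contra hne
    obtain ⟨t, ht⟩ := Finset.nonempty_iff_ne_empty.mpr hne
    have hpos : 0 < ∑ i ∈ Finset.range n, c 0 * (c i * Real.exp (L i * t)) := by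
      apply Finset.sum_pos
      · intro i hi
        have h1 := hsign i (Finset.mem_range.mp hi)
        have h2 := Real.exp_pos (L i * t)
        nlinarith
      · exact ⟨0, Finset.mem_range.mpr hn⟩
    rw [← Finset.mul_sum, hT t ht, mul_zero] at hpos
    exact lt_irrefl 0 hpos
  | succ m ih =>
    intro n hn L c hL hc hch T hT
    by_cases hle : schanges c n ≤ m
    · exact (ih n hn L c hL hc hle T hT).trans (by omega)
    have hch' : schanges c n = m + 1 := by omega
    have hfne : ((Finset.range (n-1)).filter fun i => c i * c (i+1) < 0).Nonempty := by
      rw [← Finset.card_pos, ← schanges]; omega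
    obtain ⟨j, hj⟩ := hfne
    rw [Finset.mem_filter, Finset.mem_range] at hj
    obtain ⟨hjn, hjs⟩ := hj
    have hj1n : j + 1 < n := by omega
    set β := (L j + L (j+1))/2 with hβ
    have hβ1 : L j < β := by have := hL j (j+1) (by omega) hj1n; simp [hβ]; linarith
    have hβ2 : β < L (j+1) := by have := hL j (j+1) (by omega) hj1n; simp [hβ]; linarith
    have hsgn : ∀ i, i < n → (i ≤ j → L i - β < 0) ∧ (j + 1 ≤ i → 0 < L i - β) := by
      intro i hi
      constructor
      · intro hij
        rcases eq_or_lt_of_le hij with rfl | hlt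
        · linarith
        · have := hL i j hlt (by omega); linarith
      · intro hij
        rcases eq_or_lt_of_le hij with rfl | hlt
        · linarith
        · have := hL (j+1) i hlt hi; linarith
    set c₂ : ℕ → ℝ := fun i => c i * (L i - β) with hc₂
    set L₂ : ℕ → ℝ := fun i => L i - β with hL₂
    have hL₂mono : ∀ i j, i < j → j < n → L₂ i < L₂ j := by
      intro i j hij hjn'; simp only [hL₂]; have := hL i j hij hjn'; linarith
    have hc₂ne : ∀ i, i < n → c₂ i ≠ 0 := by
      intro i hi
      rcases le_or_gt i j with h | h
      · exact mul_ne_zero (hc i hi) (ne_of_lt ((hsgn i hi).1 h))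
      · exact mul_ne_zero (hc i hi) (ne_of_gt ((hsgn i hi).2 h))
    -- sign changes decrease by exactly one
    have hfilter2 : ((Finset.range (n-1)).filter fun i => c₂ i * c₂ (i+1) < 0)
        = ((Finset.range (n-1)).filter fun i => c i * c (i+1) < 0).erase j := by
      ext i
      simp only [Finset.mem_filter, Finset.mem_erase, Finset.mem_range]
      constructor
      · rintro ⟨hir, hilt⟩
        have hin : i < n := by omega
        have hi1n : i + 1 < n := by omega
        rcases lt_trichotomy i j with h | rfl | h
        · have k1 := ((hsgn i hin).1 (by omega))
          have k2 := ((hsgn (i+1) hi1n).1 (by omega))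
          refine ⟨by omega, hir, ?_⟩
          simp only [hc₂] at hilt; nlinarith [mul_pos_of_neg_of_neg k1 k2]
        · exfalso
          have k1 := ((hsgn i hin).1 (by omega))
          have k2 := ((hsgn (i+1) hi1n).2 (by omega))
          simp only [hc₂] at hilt
          nlinarith [mul_pos_of_neg_of_neg hjs (mul_neg_of_neg_of_pos k1 k2)]
        · have k1 := ((hsgn i hin).2 (by omega))
          have k2 := ((hsgn (i+1) hi1n).2 (by omega))
          refine ⟨by omega, hir, ?_⟩
          simp only [hc₂] at hilt; nlinarith [mul_pos k1 k2]
      · rintro ⟨hij, hir, hilt⟩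
        have hin : i < n := by omega
        have hi1n : i + 1 < n := by omega
        refine ⟨hir, ?_⟩
        simp only [hc₂]
        rcases lt_or_gt_of_ne hij with h | h
        · have k1 := ((hsgn i hin).1 (by omega))
          have k2 := ((hsgn (i+1) hi1n).1 (by omega))
          nlinarith [mul_pos_of_neg_of_neg k1 k2]
        · have k1 := ((hsgn i hin).2 (by omega))
          have k2 := ((hsgn (i+1) hi1n).2 (by omega))
          nlinarith [mul_pos k1 k2]
    have hch₂ : schanges c₂ n ≤ m := by
      have : schanges c₂ n = schanges c n - 1 := by
        rw [schanges, hfilter2, Finset.card_erase_of_mem (Finset.mem_filter.mpr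
          ⟨Finset.mem_range.mpr hjn, hjs⟩)]
        rfl
      omega
    -- Rolle
    set h : ℝ → ℝ := fun t => ∑ i ∈ Finset.range n, c i * Real.exp (L₂ i * t) with hh
    set g : ℝ → ℝ := fun t => ∑ i ∈ Finset.range n, c₂ i * Real.exp (L₂ i * t) with hg
    have hderiv : ∀ x, HasDerivAt h (g x) x := by
      intro x
      rw [hh, hg]
      apply HasDerivAt.fun_sum
      intro i _
      have h1 : HasDerivAt (fun t => Real.exp (L₂ i * t)) ((L₂ i) * Real.exp (L₂ i * x)) x := by
        simpa [mul_comm] using ((hasDerivAt_id x).const_mul (L₂ i)).exp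
      have := h1.const_mul (c i)
      convert this using 1
      · rfl
      simp only [hc₂]; ring
    have hzero : ∀ t ∈ T, h t = 0 := by
      intro t ht
      show (∑ i ∈ Finset.range n, c i * Real.exp (L₂ i * t)) = 0
      have key : (∑ i ∈ Finset.range n, c i * Real.exp (L₂ i * t))
          = (∑ i ∈ Finset.range n, c i * Real.exp (L i * t)) * Real.exp (-β * t) := by
        rw [Finset.sum_mul]
        apply Finset.sum_congr rfl
        intro i _
        rw [mul_assoc, ← Real.exp_add]
        simp only [hL₂]
        congr 2
        ring
      rw [key, hT t ht, zero_mul]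
    obtain ⟨T', hT'card, hT'zero, -⟩ := rolle_finset h g hderiv T.card T le_rfl hzero
    have := ih n hn L₂ c₂ hL₂mono hc₂ne hch₂ T' (fun t ht => hT'zero t ht)
    omega

lemma schanges_le_two_mul (c : ℕ → ℝ) (n : ℕ) :
    schanges c n ≤ 2 * ((Finset.range n).filter fun i => 0 < c i).card := by
  classical
  set P := (Finset.range n).filter fun i => 0 < c i with hP
  have : schanges c n ≤ (P ×ˢ (Finset.univ : Finset Bool)).card := by
    apply Finset.card_le_card_of_injOn
      (fun i => if 0 < c (i+1) then (i+1, true) else (i, false))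
    · intro i hi
      rw [Finset.mem_coe, Finset.mem_filter, Finset.mem_range] at hi
      obtain ⟨hir, hilt⟩ := hi
      by_cases hpos : 0 < c (i+1)
      · simp only [if_pos hpos]
        exact Finset.mem_product.mpr ⟨Finset.mem_filter.mpr
          ⟨Finset.mem_range.mpr (by omega), hpos⟩, Finset.mem_univ _⟩
      · simp only [if_neg hpos]
        push_neg at hpos
        have : 0 < c i := by nlinarith
        exact Finset.mem_product.mpr ⟨Finset.mem_filter.mpr
          ⟨Finset.mem_range.mpr (by omega), this⟩, Finset.mem_univ _⟩
    · intro i₁ h₁ i₂ h₂ heq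
      by_cases p1 : 0 < c (i₁+1) <;> by_cases p2 : 0 < c (i₂+1) <;>
        simp [p1, p2, Prod.ext_iff] at heq <;> omega
  calc schanges c n ≤ (P ×ˢ (Finset.univ : Finset Bool)).card := this
    _ = 2 * P.card := by rw [Finset.card_product]; simp [mul_comm]

/-- If `G₁` has at most `k` distinct irreducible representation dimensions and
`ζ_{G₁} = ζ_{G₂}` at `4k + 1` distinct real points, then `ζ_{G₁} = ζ_{G₂}` identically,
equivalently the multisets of irreducible dimensions coincide. -/
theorem stmt7 (G₁ G₂ : Type) [Group G₁] [Fintype G₁] [Group G₂] [Fintype G₂] (k : ℕ)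
    (hN : {d : ℕ | ∃ V : FDRep ℂ G₁, Simple V ∧ finrank ℂ V = d}.ncard ≤ k)
    (S : Finset ℝ) (hS : S.card = 4 * k + 1)
    (hagree : ∀ s ∈ S, repZeta G₁ s = repZeta G₂ s) :
    (∀ s : ℝ, repZeta G₁ s = repZeta G₂ s) ∧
    ∀ d : ℕ, Nat.card (IrrOfDim ℂ G₁ d) = Nat.card (IrrOfDim ℂ G₂ d) := by
  classical
  set A : ℕ → ℕ := fun d => Nat.card (IrrOfDim ℂ G₁ d) with hA
  set B : ℕ → ℕ := fun d => Nat.card (IrrOfDim ℂ G₂ d) with hB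
  have hUfin : (dimSet G₁ ∪ dimSet G₂).Finite := (dimSet_finite G₁).union (dimSet_finite G₂)
  set DU : Finset ℕ := hUfin.toFinset with hDU
  have hmemDU : ∀ d : ℕ, d ∈ DU ↔ d ∈ dimSet G₁ ∪ dimSet G₂ := fun d => hUfin.mem_toFinset
  have hrep1 : ∀ s : ℝ, repZeta G₁ s = ∑ d ∈ DU, (A d : ℝ) * (d : ℝ) ^ (-s) := by
    intro s
    apply finsum_eq_finset_sum_of_support_subset
    intro x hx
    simp only [Function.mem_support] at hx
    have : A x ≠ 0 := by
      intro h0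
      apply hx
      show (A x : ℝ) * (x : ℝ) ^ (-s) = 0
      rw [h0]; simp
    exact Finset.mem_coe.mpr ((hmemDU x).mpr (Or.inl (mem_dimSet_of_card_ne_zero G₁ x this)))
  have hrep2 : ∀ s : ℝ, repZeta G₂ s = ∑ d ∈ DU, (B d : ℝ) * (d : ℝ) ^ (-s) := by
    intro s
    apply finsum_eq_finset_sum_of_support_subset
    intro x hx
    simp only [Function.mem_support] at hx
    have : B x ≠ 0 := by
      intro h0
      apply hx
      show (B x : ℝ) * (x : ℝ) ^ (-s) = 0
      rw [h0]; simp
    exact Finset.mem_coe.mpr ((hmemDU x).mpr (Or.inr (mem_dimSet_of_card_ne_zero G₂ x this)))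
  set c : ℕ → ℝ := fun d => (A d : ℝ) - (B d : ℝ) with hc
  set F : Finset ℕ := DU.filter (fun d => c d ≠ 0) with hF
  have hFempty : F = ∅ := by
    by_contra hFne
    have hFne' : F.Nonempty := Finset.nonempty_iff_ne_empty.mpr hFne
    set n : ℕ := F.card with hn
    have hnpos : 0 < n := Finset.card_pos.mpr hFne'
    have hFpos : ∀ d ∈ F, 0 < d := by
      intro d hd
      rcases Nat.eq_zero_or_pos d with rfl | h
      · exfalso
        rcases (hmemDU 0).mp (Finset.mem_of_mem_filter 0 hd) with h0 | h0
        · exact zero_not_mem_dimSet G₁ h0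
        · exact zero_not_mem_dimSet G₂ h0
      · exact h
    -- the zeros
    have hzeroS : ∀ s ∈ S, ∑ d ∈ F, c d * (d : ℝ) ^ (-s) = 0 := by
      intro s hs
      have h1 : ∑ d ∈ DU, c d * (d : ℝ) ^ (-s) = 0 := by
        have : ∑ d ∈ DU, c d * (d : ℝ) ^ (-s)
            = (∑ d ∈ DU, (A d : ℝ) * (d : ℝ) ^ (-s)) - ∑ d ∈ DU, (B d : ℝ) * (d : ℝ) ^ (-s) := by
          rw [← Finset.sum_sub_distrib]
          apply Finset.sum_congr rfl
          intro d _
          simp only [hc]; ring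
        rw [this, ← hrep1, ← hrep2, hagree s hs, sub_self]
      rw [← h1]
      apply Finset.sum_filter_of_ne
      intro x _ hx hcx
      exact hx (by rw [hcx, zero_mul])
    -- enumerate F
    set e := F.orderIsoOfFin hn.symm with he
    set c' : ℕ → ℝ := fun i => if h : i < n then c ((e ⟨i, h⟩ : ℕ)) else 1 with hc'
    set L' : ℕ → ℝ := fun i => if h : i < n then Real.log ((e ⟨i, h⟩ : ℕ)) else 0 with hL'
    have hmemF : ∀ (i : Fin n), ((e i : ℕ)) ∈ F := fun i => (e i).2
    have hLmono : ∀ i j, i < j → j < n → L' i < L' j := by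
      intro i j hij hjn
      have hin : i < n := lt_trans hij hjn
      rw [hL']
      simp only [dif_pos hin, dif_pos hjn]
      have hlt : ((e ⟨i, hin⟩ : ℕ)) < ((e ⟨j, hjn⟩ : ℕ)) :=
        Subtype.coe_lt_coe.mpr (e.strictMono (by exact hij))
      apply Real.log_lt_log
      · exact_mod_cast hFpos _ (hmemF ⟨i, hin⟩)
      · exact_mod_cast hlt
    have hcne : ∀ i, i < n → c' i ≠ 0 := by
      intro i hi
      rw [hc']
      simp only [dif_pos hi]
      exact (Finset.mem_filter.mp (hmemF ⟨i, hi⟩)).2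
    set T : Finset ℝ := S.image (fun s => -s) with hT
    have hTcard : T.card = 4 * k + 1 := by
      rw [hT, Finset.card_image_of_injective S neg_injective, hS]
    have hzeroT : ∀ t ∈ T, ∑ i ∈ Finset.range n, c' i * Real.exp (L' i * t) = 0 := by
      intro t ht
      obtain ⟨s, hs, rfl⟩ := Finset.mem_image.mp ht
      have hsum : ∑ i ∈ Finset.range n, c' i * Real.exp (L' i * (-s))
          = ∑ d ∈ F, c d * Real.exp (Real.log d * (-s)) := by
        rw [Finset.sum_range]
        apply Finset.sum_bij (fun (i : Fin n) _ => ((e i : ℕ)))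
        · intro i _; exact hmemF i
        · intro i _ j _ hij
          exact e.injective (Subtype.ext hij)
        · intro d hd
          exact ⟨e.symm ⟨d, hd⟩, Finset.mem_univ _, by simp⟩
        · intro i _
          rw [hc', hL']
          simp only [dif_pos i.isLt, Fin.eta]
      rw [hsum]
      have : ∑ d ∈ F, c d * Real.exp (Real.log d * (-s)) = ∑ d ∈ F, c d * (d : ℝ) ^ (-s) := by
        apply Finset.sum_congr rfl
        intro d hd
        rw [Real.rpow_def_of_pos (by exact_mod_cast hFpos d hd)]
      rw [this]
      exact hzeroS s hs
    -- positive coefficients ≤ k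
    have hposle : ((Finset.range n).filter fun i => 0 < c' i).card ≤ k := by
      have h1 : ((Finset.range n).filter fun i => 0 < c' i).card
          ≤ ((dimSet_finite G₁).toFinset).card := by
        apply Finset.card_le_card_of_injOn (fun i => if h : i < n then ((e ⟨i, h⟩ : ℕ)) else 0)
        · intro i hi
          rw [Finset.mem_coe, Finset.mem_filter, Finset.mem_range] at hi
          obtain ⟨hin, hipos⟩ := hi
          have hipos' : 0 < c ((e ⟨i, hin⟩ : ℕ)) := by
            simpa only [hc', dif_pos hin] using hipos
          simp only [dif_pos hin, Set.Finite.mem_toFinset, Finset.mem_coe]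
          have hApos : A ((e ⟨i, hin⟩ : ℕ)) ≠ 0 := by
            intro h0
            simp only [hc] at hipos'
            rw [h0] at hipos'
            have : (0 : ℝ) ≤ (B ((e ⟨i, hin⟩ : ℕ)) : ℝ) := Nat.cast_nonneg _
            push_cast at hipos'
            linarith
          exact mem_dimSet_of_card_ne_zero G₁ _ hApos
        · intro i hi j hj hij
          rw [Finset.mem_coe, Finset.mem_filter, Finset.mem_range] at hi hj
          simp only [dif_pos hi.1, dif_pos hj.1] at hij
          have := e.injective (Subtype.ext hij)
          exact congrArg Fin.val (by exact_mod_cast this)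
      have h2 : ((dimSet_finite G₁).toFinset).card = (dimSet G₁).ncard :=
        (Set.ncard_eq_toFinset_card _ _).symm
      rw [h2] at h1
      exact h1.trans hN
    have hsch : schanges c' n ≤ 2 * k :=
      (schanges_le_two_mul c' n).trans (by omega)
    have := descartes (2 * k) n hnpos L' c' hLmono hcne hsch T hzeroT
    omega
  have key : ∀ d : ℕ, A d = B d := by
    intro d
    by_cases hd : d ∈ DU
    · by_contra hne
      have hcd : c d ≠ 0 := by
        simp only [hc]
        intro h
        exact hne (by exact_mod_cast sub_eq_zero.mp h)
      have : d ∈ F := Finset.mem_filter.mpr ⟨hd, hcd⟩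
      rw [hFempty] at this
      exact absurd this (Finset.notMem_empty d)
    · have hA0 : A d = 0 := by
        by_contra h
        exact hd ((hmemDU d).mpr (Or.inl (mem_dimSet_of_card_ne_zero G₁ d h)))
      have hB0 : B d = 0 := by
        by_contra h
        exact hd ((hmemDU d).mpr (Or.inr (mem_dimSet_of_card_ne_zero G₂ d h)))
      rw [hA0, hB0]
  refine ⟨fun s => ?_, key⟩
  rw [hrep1 s, hrep2 s]
  exact Finset.sum_congr rfl fun d _ => by rw [show A d = B d from key d]
end
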